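/- arXiv:cond-mat/9805086 — 3 statements merged into one kernel-verified Lean document; each statement's English description precedes it below -/
import Mathlib

section
/- Let A be a 3×3 Hermitian matrix with diagonal entries a, b, c ∈ ℝ and off-diagonal entries A₁₂ = δ, A₁₃ = γ, A₂₃ = ε, where δ, γ, ε are nonzero complex numbers. If A has an eigenvalue λ of multiplicity at least 2, then a − δ̄γ/ε = b − δε/γ = c − γε̄/δ = λ, and in particular these three quantities are equal and real. -/
open Polynomial Matrix Complex

theorem charpoly_conj_aux {n : Type*} [DecidableEq n] [Fintype n] {R : Type*} [CommRing R]
    (P M Q : Matrix n n R) (h1 : P * Q = 1) (h2 : Q * P = 1) :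
    (P * M * Q).charpoly = M.charpoly := by
  have hPQ : P.map C * Q.map C = 1 := by rw [← Matrix.map_mul, h1, Matrix.map_one _ (map_zero C) (map_one C)]
  have hQP : Q.map C * P.map C = 1 := by rw [← Matrix.map_mul, h2, Matrix.map_one _ (map_zero C) (map_one C)]
  unfold Matrix.charpoly
  have key : charmatrix (P * M * Q) = P.map C * charmatrix M * Q.map C := by
    unfold charmatrix
    have hs : P.map C * Matrix.scalar n (X : R[X]) * Q.map C = Matrix.scalar n (X : R[X]) := by
      rw [(Matrix.scalar_commute (X : R[X]) (fun r => Commute.all _ _) (P.map C)).symm.eq,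
        mul_assoc, hPQ, mul_one]
    have hm : (C : R →+* R[X]).mapMatrix (P * M * Q) = P.map C * (C : R →+* R[X]).mapMatrix M * Q.map C := by
      simp [RingHom.mapMatrix_apply, Matrix.map_mul]
    rw [hm, Matrix.mul_sub, Matrix.sub_mul, hs]
  rw [key, det_mul, det_mul, mul_comm, ← mul_assoc, ← det_mul, hQP, det_one, one_mul]

theorem charpoly_diag3 (d : Fin 3 → ℂ) :
    (Matrix.diagonal d).charpoly = ∏ i, (X - C (d i)) := by
  rw [Matrix.charpoly_of_upperTriangular _ (Matrix.blockTriangular_diagonal d)]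
  simp

theorem key3 (U : Matrix (Fin 3) (Fin 3) ℂ) (hU : U * star U = 1) (d : Fin 3 → ℂ)
    (lam : ℂ) (k : Fin 3) (hd : ∀ i, i ≠ k → d i = lam) (p q : Fin 3) :
    (U * Matrix.diagonal d * star U) p q
      = lam * (1 : Matrix (Fin 3) (Fin 3) ℂ) p q
        + (d k - lam) * U p k * starRingEnd ℂ (U q k) := by
  have h1 := congrFun (congrFun hU p) q
  simp only [Matrix.mul_apply, Fin.sum_univ_three, Matrix.star_apply, star_def,
    Matrix.diagonal_apply_eq, Matrix.diagonal_apply_ne _ (by decide : (0:Fin 3) ≠ 1),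
    Matrix.diagonal_apply_ne _ (by decide : (0:Fin 3) ≠ 2),
    Matrix.diagonal_apply_ne _ (by decide : (1:Fin 3) ≠ 0),
    Matrix.diagonal_apply_ne _ (by decide : (1:Fin 3) ≠ 2),
    Matrix.diagonal_apply_ne _ (by decide : (2:Fin 3) ≠ 0),
    Matrix.diagonal_apply_ne _ (by decide : (2:Fin 3) ≠ 1),
    mul_zero, zero_mul, add_zero, zero_add] at h1 ⊢
  fin_cases k <;> simp only [Fin.zero_eta, Fin.mk_one, Fin.reduceFinMk] at hd ⊢
  · rw [hd 1 (by decide), hd 2 (by decide)]; linear_combination lam * h1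
  · rw [hd 0 (by decide), hd 2 (by decide)]; linear_combination lam * h1
  · rw [hd 0 (by decide), hd 1 (by decide)]; linear_combination lam * h1

/-- If the 3×3 Hermitian matrix `[[a, δ, γ],[δ̄, b, ε],[γ̄, ε̄, c]]` (with `a,b,c` real
and `δ,γ,ε` nonzero complex) has an eigenvalue `λ` of multiplicity at least 2, then
`a − δ̄γ/ε = b − δε/γ = c − γε̄/δ = λ`. -/
theorem stmt0 (a b c : ℝ) (δ γ ε : ℂ) (hδ : δ ≠ 0) (hγ : γ ≠ 0) (hε : ε ≠ 0)
    (A : Matrix (Fin 3) (Fin 3) ℂ)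
    (hA : A = !![(a : ℂ), δ, γ; starRingEnd ℂ δ, (b : ℂ), ε;
                 starRingEnd ℂ γ, starRingEnd ℂ ε, (c : ℂ)])
    (lam : ℂ) (hmult : (X - C lam) ^ 2 ∣ A.charpoly) :
    (a : ℂ) - starRingEnd ℂ δ * γ / ε = lam ∧
    (b : ℂ) - δ * ε / γ = lam ∧
    (c : ℂ) - γ * starRingEnd ℂ ε / δ = lam ∧ lam.im = 0 := by
  subst hA
  set A : Matrix (Fin 3) (Fin 3) ℂ :=
    !![(a : ℂ), δ, γ; starRingEnd ℂ δ, (b : ℂ), ε;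
       starRingEnd ℂ γ, starRingEnd ℂ ε, (c : ℂ)] with hA
  have hherm : A.IsHermitian := by
    apply Matrix.ext
    intro i j
    fin_cases i <;> fin_cases j <;>
      simp [hA, Matrix.conjTranspose_apply, Complex.conj_ofReal]
  set V : Matrix (Fin 3) (Fin 3) ℂ := (hherm.eigenvectorUnitary : Matrix (Fin 3) (Fin 3) ℂ) with hVdef
  have hU1 : V * star V = 1 := Matrix.mem_unitaryGroup_iff.mp hherm.eigenvectorUnitary.2
  have hU2 : star V * V = 1 := Matrix.mem_unitaryGroup_iff'.mp hherm.eigenvectorUnitary.2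
  set d : Fin 3 → ℂ := fun i => ((hherm.eigenvalues i : ℝ) : ℂ) with hddef
  have hspec : A = V * Matrix.diagonal d * star V := hherm.spectral_theorem
  have hcp : A.charpoly = (X - C (d 0)) * ((X - C (d 1)) * (X - C (d 2))) := by
    calc A.charpoly = (V * Matrix.diagonal d * star V).charpoly := by rw [← hspec]
    _ = (Matrix.diagonal d).charpoly := charpoly_conj_aux _ _ _ hU1 hU2
    _ = ∏ i, (X - C (d i)) := charpoly_diag3 d
    _ = (X - C (d 0)) * ((X - C (d 1)) * (X - C (d 2))) := by
        rw [Fin.prod_univ_three]; ring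
  have hXsub : ∀ x : ℂ, (X - C x) ≠ (0 : ℂ[X]) := fun x => (monic_X_sub_C x).ne_zero
  have hcount : 2 ≤ A.charpoly.roots.count lam := by
    rw [Polynomial.count_roots]
    refine (Polynomial.le_rootMultiplicity_iff ?_).mpr hmult
    rw [hcp]
    exact mul_ne_zero (hXsub _) (mul_ne_zero (hXsub _) (hXsub _))
  have hroots : A.charpoly.roots = {d 0, d 1, d 2} := by
    rw [hcp, Polynomial.roots_mul (mul_ne_zero (hXsub _) (mul_ne_zero (hXsub _) (hXsub _))),
      Polynomial.roots_mul (mul_ne_zero (hXsub _) (hXsub _)),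
      Polynomial.roots_X_sub_C, Polynomial.roots_X_sub_C, Polynomial.roots_X_sub_C]
    rfl
  rw [hroots] at hcount
  simp only [Multiset.insert_eq_cons, Multiset.count_cons, Multiset.count_singleton] at hcount
  obtain ⟨k, hdk⟩ : ∃ k : Fin 3, ∀ i, i ≠ k → d i = lam := by
    by_cases H0 : lam = d 0 <;> by_cases H1 : lam = d 1 <;> by_cases H2 : lam = d 2
    · exact ⟨2, fun i hi => by fin_cases i <;> simp only [Fin.zero_eta, Fin.mk_one, Fin.reduceFinMk] at hi ⊢ <;> first | exact absurd rfl hi | exact H0.symm | exact H1.symm | exact H2.symm⟩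
    · exact ⟨2, fun i hi => by fin_cases i <;> simp only [Fin.zero_eta, Fin.mk_one, Fin.reduceFinMk] at hi ⊢ <;> first | exact absurd rfl hi | exact H0.symm | exact H1.symm | exact H2.symm⟩
    · exact ⟨1, fun i hi => by fin_cases i <;> simp only [Fin.zero_eta, Fin.mk_one, Fin.reduceFinMk] at hi ⊢ <;> first | exact absurd rfl hi | exact H0.symm | exact H1.symm | exact H2.symm⟩
    · exfalso; rw [if_neg H2, if_neg H1, if_pos H0] at hcount; omega
    · exact ⟨0, fun i hi => by fin_cases i <;> simp only [Fin.zero_eta, Fin.mk_one, Fin.reduceFinMk] at hi ⊢ <;> first | exact absurd rfl hi | exact H0.symm | exact H1.symm | exact H2.symm⟩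
    · exfalso; rw [if_neg H2, if_pos H1, if_neg H0] at hcount; omega
    · exfalso; rw [if_pos H2, if_neg H1, if_neg H0] at hcount; omega
    · exfalso; rw [if_neg H2, if_neg H1, if_neg H0] at hcount; omega
  have him : lam.im = 0 := by
    rcases eq_or_ne k 0 with rfl | h
    · rw [← hdk 1 (by decide)]; simp [hddef]
    · rw [← hdk 0 (fun e => h e.symm)]; simp [hddef]
  set μ : ℂ := d k - lam with hμ
  have E : ∀ p q, A p q = lam * (1 : Matrix (Fin 3) (Fin 3) ℂ) p q
      + μ * V p k * starRingEnd ℂ (V q k) := by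
    intro p q
    conv_lhs => rw [hspec]
    exact key3 V hU1 d lam k hdk p q
  have e00 : (a : ℂ) = lam + μ * V 0 k * starRingEnd ℂ (V 0 k) := by
    have := E 0 0; simpa [hA, Matrix.one_apply] using this
  have e01 : δ = μ * V 0 k * starRingEnd ℂ (V 1 k) := by
    have := E 0 1; simpa [hA, Matrix.one_apply] using this
  have e02 : γ = μ * V 0 k * starRingEnd ℂ (V 2 k) := by
    have := E 0 2; simpa [hA, Matrix.one_apply] using this
  have e10 : starRingEnd ℂ δ = μ * V 1 k * starRingEnd ℂ (V 0 k) := by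
    have := E 1 0; simpa [hA, Matrix.one_apply] using this
  have e11 : (b : ℂ) = lam + μ * V 1 k * starRingEnd ℂ (V 1 k) := by
    have := E 1 1; simpa [hA, Matrix.one_apply] using this
  have e12 : ε = μ * V 1 k * starRingEnd ℂ (V 2 k) := by
    have := E 1 2; simpa [hA, Matrix.one_apply] using this
  have e21 : starRingEnd ℂ ε = μ * V 2 k * starRingEnd ℂ (V 1 k) := by
    have := E 2 1; simpa [hA, Matrix.one_apply] using this
  have e22 : (c : ℂ) = lam + μ * V 2 k * starRingEnd ℂ (V 2 k) := by
    have := E 2 2; simpa [hA, Matrix.one_apply] using this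
  have P1 : ((a : ℂ) - lam) * ε = starRingEnd ℂ δ * γ := by
    rw [e00, e12, e10, e02]; ring
  have P2 : ((b : ℂ) - lam) * γ = δ * ε := by
    rw [e11, e02, e01, e12]; ring
  have P3 : ((c : ℂ) - lam) * δ = γ * starRingEnd ℂ ε := by
    rw [e22, e01, e02, e21]; ring
  refine ⟨?_, ?_, ?_, him⟩
  · field_simp
    linear_combination P1
  · field_simp
    linear_combination P2
  · field_simp
    linear_combination P3
end

section
/- Let A be a 3×3 Hermitian matrix with diagonal entries a, b, c ∈ ℝ and off-diagonal entries A₁₂ = δ, A₁₃ = γ, A₂₃ = ε, where δ, γ, ε are nonzero complex numbers. If there is a real number λ with a − δ̄γ/ε = b − δε/γ = c − γε̄/δ = λ, then λ is an eigenvalue of A of multiplicity at least 2. -/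
open Polynomial Matrix Complex

/-- Converse: if `a − δ̄γ/ε = b − δε/γ = c − γε̄/δ = λ` with `λ` real, then `λ` is an
eigenvalue of multiplicity at least 2 of the Hermitian matrix
`[[a, δ, γ],[δ̄, b, ε],[γ̄, ε̄, c]]`. -/
theorem stmt1 (a b c : ℝ) (δ γ ε : ℂ) (hδ : δ ≠ 0) (hγ : γ ≠ 0) (hε : ε ≠ 0)
    (A : Matrix (Fin 3) (Fin 3) ℂ)
    (hA : A = !![(a : ℂ), δ, γ; starRingEnd ℂ δ, (b : ℂ), ε;
                 starRingEnd ℂ γ, starRingEnd ℂ ε, (c : ℂ)])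
    (lam : ℝ)
    (h1 : (a : ℂ) - starRingEnd ℂ δ * γ / ε = (lam : ℂ))
    (h2 : (b : ℂ) - δ * ε / γ = (lam : ℂ))
    (h3 : (c : ℂ) - γ * starRingEnd ℂ ε / δ = (lam : ℂ)) :
    (X - C (lam : ℂ)) ^ 2 ∣ A.charpoly := by
  set δ' := starRingEnd ℂ δ with hδ'
  set γ' := starRingEnd ℂ γ with hγ'
  set ε' := starRingEnd ℂ ε with hε'
  suffices h : A.charpoly =
      (X - C (lam : ℂ)) ^ 2 * (X - (C (a:ℂ) + C (b:ℂ) + C (c:ℂ) - 2 * C (lam:ℂ))) from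
    ⟨_, h⟩
  rw [Matrix.charpoly, hA, Matrix.det_fin_three]
  simp only [charmatrix_apply, Matrix.diagonal_apply, Matrix.cons_val', Matrix.cons_val_zero,
    Matrix.cons_val_one, Matrix.head_cons, Matrix.empty_val', Matrix.cons_val_fin_one,
    Matrix.head_fin_const, Matrix.cons_val_two, Matrix.tail_cons, Matrix.head_fin_const]
  norm_num
  simp only [if_neg (by decide : ¬((1:Fin 3)=2)), if_neg (by decide : ¬((2:Fin 3)=1)),
    if_neg (by decide : ¬((2:Fin 3)=0)), if_neg (by decide : ¬((0:Fin 3)=2))]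
  have f1 : δ' * γ = ((a:ℂ) - lam) * ε := by
    field_simp at h1; linear_combination -h1
  have f2 : δ * ε = ((b:ℂ) - lam) * γ := by
    field_simp at h2; linear_combination -h2
  have f3 : γ * ε' = ((c:ℂ) - lam) * δ := by
    field_simp at h3; linear_combination -h3
  have hconj : ∀ x : ℝ, starRingEnd ℂ ((x:ℂ) - lam) = (x:ℂ) - lam := by
    intro x; simp
  have f2' : δ' * ε' = ((b:ℂ) - lam) * γ' := by
    have := congrArg (starRingEnd ℂ) f2
    simpa [hδ', hγ', hε', _root_.map_mul, _root_.map_sub, Complex.conj_conj,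
      Complex.conj_ofReal, mul_comm] using this
  have f3' : γ' * ε = ((c:ℂ) - lam) * δ' := by
    have := congrArg (starRingEnd ℂ) f3
    simpa [hδ', hγ', hε', _root_.map_mul, _root_.map_sub, Complex.conj_conj,
      Complex.conj_ofReal, mul_comm] using this
  have f4 : δ * δ' = ((a:ℂ) - lam) * ((b:ℂ) - lam) := by
    apply mul_right_cancel₀ (mul_ne_zero hγ hε)
    linear_combination (δ*ε)*f1 + (((a:ℂ)-lam)*ε)*f2
  have hδ'0 : δ' ≠ 0 := by simpa [hδ'] using hδ
  have f5 : γ * γ' = ((a:ℂ) - lam) * ((c:ℂ) - lam) := by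
    apply mul_right_cancel₀ (mul_ne_zero hδ'0 hε)
    linear_combination (γ'*ε)*f1 + (((a:ℂ)-lam)*ε)*f3'
  have f6 : ε * ε' = ((b:ℂ) - lam) * ((c:ℂ) - lam) := by
    apply mul_right_cancel₀ (mul_ne_zero hδ hγ)
    linear_combination (γ*ε')*f2 + (((b:ℂ)-lam)*γ)*f3
  have F2 : Polynomial.C δ * Polynomial.C ε = (C (b:ℂ) - C (lam:ℂ)) * C γ := by
    rw [← C_mul, f2]; simp [_root_.map_mul, _root_.map_sub]
  have F2' : Polynomial.C δ' * Polynomial.C ε' = (C (b:ℂ) - C (lam:ℂ)) * C γ' := by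
    rw [← C_mul, f2']; simp [_root_.map_mul, _root_.map_sub]
  have F4 : Polynomial.C δ * Polynomial.C δ' = (C (a:ℂ) - C (lam:ℂ)) * (C (b:ℂ) - C (lam:ℂ)) := by
    rw [← C_mul, f4]; simp [_root_.map_mul, _root_.map_sub]
  have F5 : Polynomial.C γ * Polynomial.C γ' = (C (a:ℂ) - C (lam:ℂ)) * (C (c:ℂ) - C (lam:ℂ)) := by
    rw [← C_mul, f5]; simp [_root_.map_mul, _root_.map_sub]
  have F6 : Polynomial.C ε * Polynomial.C ε' = (C (b:ℂ) - C (lam:ℂ)) * (C (c:ℂ) - C (lam:ℂ)) := by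
    rw [← C_mul, f6]; simp [_root_.map_mul, _root_.map_sub]
  simp only [Matrix.cons_val] at *
  linear_combination (C (a:ℂ) - X) * F6 + (2 * C (lam:ℂ) - C (b:ℂ) - X) * F5 +
    (C (c:ℂ) - X) * F4 + (- C γ') * F2 + (- C γ) * F2'
end

section
/- Let A be a 3×3 Hermitian matrix as above with a doubly degenerate eigenvalue λ satisfying a − δ̄γ/ε = b − δε/γ = c − γε̄/δ = λ. Then the third eigenvalue is λ' = tr(A) − 2λ, and λ' > λ if and only if Re(δ·ε·γ̄) > 0. -/
open Polynomial Matrix Complex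

/-- If the Hermitian matrix `[[a, δ, γ],[δ̄, b, ε],[γ̄, ε̄, c]]` has a doubly degenerate
eigenvalue `λ` satisfying `a − δ̄γ/ε = b − δε/γ = c − γε̄/δ = λ`, then the third
eigenvalue is `λ' = tr(A) − 2λ` (i.e. the characteristic polynomial is
`(X − λ)²(X − λ')`), and `λ' > λ` iff `Re(δ·ε·γ̄) > 0`. -/
theorem stmt2 (a b c : ℝ) (δ γ ε : ℂ) (hδ : δ ≠ 0) (hγ : γ ≠ 0) (hε : ε ≠ 0)
    (A : Matrix (Fin 3) (Fin 3) ℂ)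
    (hA : A = !![(a : ℂ), δ, γ; starRingEnd ℂ δ, (b : ℂ), ε;
                 starRingEnd ℂ γ, starRingEnd ℂ ε, (c : ℂ)])
    (lam : ℝ)
    (h1 : (a : ℂ) - starRingEnd ℂ δ * γ / ε = (lam : ℂ))
    (h2 : (b : ℂ) - δ * ε / γ = (lam : ℂ))
    (h3 : (c : ℂ) - γ * starRingEnd ℂ ε / δ = (lam : ℂ))
    (lam' : ℝ) (hlam' : lam' = a + b + c - 2 * lam) :
    A.charpoly = (X - C (lam : ℂ)) ^ 2 * (X - C (lam' : ℂ)) ∧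
    (lam' > lam ↔ 0 < (δ * ε * starRingEnd ℂ γ).re) := by
  have E1 : starRingEnd ℂ δ * γ = ((a:ℂ) - lam) * ε := by
    field_simp at h1; linear_combination -h1
  have E2 : δ * ε = ((b:ℂ) - lam) * γ := by
    field_simp at h2; linear_combination -h2
  have E3 : γ * starRingEnd ℂ ε = ((c:ℂ) - lam) * δ := by
    field_simp at h3; linear_combination -h3
  have E1c : δ * starRingEnd ℂ γ = ((a:ℂ) - lam) * starRingEnd ℂ ε := by
    have := congrArg (starRingEnd ℂ) E1
    simpa [mul_comm] using this
  have D1 : δ * starRingEnd ℂ δ = ((a:ℂ) - lam) * ((b:ℂ) - lam) := by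
    apply mul_right_cancel₀ hε
    linear_combination starRingEnd ℂ δ * E2 + ((b:ℂ) - lam) * E1
  have D2 : ε * starRingEnd ℂ ε = ((b:ℂ) - lam) * ((c:ℂ) - lam) := by
    apply mul_right_cancel₀ (mul_ne_zero hγ hδ)
    linear_combination γ * starRingEnd ℂ ε * E2 + ((b:ℂ) - lam) * γ * E3
  have D3 : γ * starRingEnd ℂ γ = ((a:ℂ) - lam) * ((c:ℂ) - lam) := by
    apply mul_right_cancel₀ (mul_ne_zero hδ (show starRingEnd ℂ ε ≠ 0 by simp [hε]))
    linear_combination γ * starRingEnd ℂ ε * E1c + ((a:ℂ) - lam) * starRingEnd ℂ ε * E3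
  have P1 : δ * ε * starRingEnd ℂ γ = ((a:ℂ) - lam) * ((b:ℂ) - lam) * ((c:ℂ) - lam) := by
    linear_combination starRingEnd ℂ γ * E2 + ((b:ℂ) - lam) * D3
  have P2 : starRingEnd ℂ δ * starRingEnd ℂ ε * γ
      = ((a:ℂ) - lam) * ((b:ℂ) - lam) * ((c:ℂ) - lam) := by
    have := congrArg (starRingEnd ℂ) P1
    simpa [mul_comm, mul_left_comm] using this
  -- lifts to ℂ[X]
  have LD1 := congrArg (C : ℂ → ℂ[X]) D1
  have LD2 := congrArg (C : ℂ → ℂ[X]) D2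
  have LD3 := congrArg (C : ℂ → ℂ[X]) D3
  have LP1 := congrArg (C : ℂ → ℂ[X]) P1
  have LP2 := congrArg (C : ℂ → ℂ[X]) P2
  simp only [_root_.map_mul, map_sub] at LD1 LD2 LD3 LP1 LP2
  have hl : (lam' : ℂ) = (a:ℂ) + b + c - 2 * lam := by
    rw [hlam']; push_cast; ring
  have Hl := congrArg (C : ℂ → ℂ[X]) hl
  simp only [map_add, map_sub, _root_.map_mul, map_ofNat] at Hl
  constructor
  · subst hA
    rw [Matrix.charpoly, Matrix.det_fin_three]
    simp [charmatrix_apply, Matrix.one_apply]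
    linear_combination -((X - C (a:ℂ)) * LD2) - (X - C (b:ℂ)) * LD3 - (X - C (c:ℂ)) * LD1
      - LP1 - LP2 + (X - C (lam:ℂ))^2 * Hl
  · -- real part
    have ht : normSq δ = (a - lam) * (b - lam) := by
      have : ((normSq δ : ℝ) : ℂ) = (((a - lam) * (b - lam) : ℝ) : ℂ) := by
        rw [← Complex.mul_conj]; push_cast; linear_combination D1
      exact_mod_cast this
    have hu : normSq ε = (b - lam) * (c - lam) := by
      have : ((normSq ε : ℝ) : ℂ) = (((b - lam) * (c - lam) : ℝ) : ℂ) := by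
        rw [← Complex.mul_conj]; push_cast; linear_combination D2
      exact_mod_cast this
    have hv : normSq γ = (a - lam) * (c - lam) := by
      have : ((normSq γ : ℝ) : ℂ) = (((a - lam) * (c - lam) : ℝ) : ℂ) := by
        rw [← Complex.mul_conj]; push_cast; linear_combination D3
      exact_mod_cast this
    have hre : (δ * ε * starRingEnd ℂ γ).re = (a - lam) * (b - lam) * (c - lam) := by
      rw [P1]; simp [← Complex.ofReal_sub, ← Complex.ofReal_mul]
    set t := a - lam with htdef
    set u := b - lam with hudef
    set v := c - lam with hvdef
    have htu : 0 < t * u := by rw [← ht]; exact normSq_pos.mpr hδ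
    have huv : 0 < u * v := by rw [← hu]; exact normSq_pos.mpr hε
    have htv : 0 < t * v := by rw [← hv]; exact normSq_pos.mpr hγ
    rw [hre]
    rcases lt_trichotomy t 0 with h | h | h
    · have hu' : u < 0 := by nlinarith
      have hv' : v < 0 := by nlinarith
      constructor
      · intro hgt; exfalso; rw [hlam'] at hgt; nlinarith
      · intro hp; exfalso; nlinarith
    · exfalso; rw [h] at htu; simp at htu
    · have hu' : 0 < u := by nlinarith
      have hv' : 0 < v := by nlinarith
      constructor
      · intro _; positivity
      · intro _; rw [hlam']; nlinarith
end
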